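/- Let g and h be finite-dimensional real Lie algebras, let Ψ ∈ C^∞(g*) be a Casimir function for the linear (Lie–Poisson) structure on g* (i.e. {x, Ψ} = 0 for all linear functions x on g*), and let C be a 2-cocycle on h with trivial real coefficients. Then the bivector π on (g ⊕ h)* given in linear coordinates xⁱ on g* and yᵃ on h* by π^{ij} = x^k g^{ij}_k (the Lie–Poisson structure of g), π^{ai} = 0, and π^{ab} = y^c h^{ab}_c + Ψ(x) C^{ab}, satisfies the Jacobi identity, i.e. defines a Poisson structure. -/

import Mathlib

lemma fderiv_lin {ι : Type*} [Fintype ι] {n : ℕ} (c : Fin n → ℝ) (e : Fin n → ι) (x v : ι → ℝ) :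
    fderiv ℝ (fun y : ι → ℝ => ∑ l, c l * y (e l)) x v = ∑ l, c l * v (e l) := by
  have H1 : ∀ l : Fin n, HasFDerivAt (fun y : ι → ℝ => c l * y (e l))
      (c l • (ContinuousLinearMap.proj (e l) : (ι → ℝ) →L[ℝ] ℝ)) x := by
    intro l
    exact ((ContinuousLinearMap.proj (e l) : (ι → ℝ) →L[ℝ] ℝ).hasFDerivAt (x := x)).const_mul (c l)
  have H : HasFDerivAt (fun y : ι → ℝ => ∑ l, c l * y (e l))
      (∑ l, c l • (ContinuousLinearMap.proj (e l) : (ι → ℝ) →L[ℝ] ℝ)) x :=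
    HasFDerivAt.fun_sum (fun l _ => H1 l)
  rw [H.fderiv]
  simp [ContinuousLinearMap.proj_apply]

lemma fderiv_hh {m p : ℕ} (c : Fin p → ℝ) (K : ℝ) (Ψ : (Fin m → ℝ) → ℝ) (hΨ : Differentiable ℝ Ψ)
    (x v : (Fin m ⊕ Fin p) → ℝ) :
    fderiv ℝ (fun y : (Fin m ⊕ Fin p) → ℝ =>
        (∑ d, c d * y (Sum.inr d)) + Ψ (fun i => y (Sum.inl i)) * K) x v =
      (∑ d, c d * v (Sum.inr d)) +
        (fderiv ℝ Ψ (fun i => x (Sum.inl i)) (fun i => v (Sum.inl i))) * K := by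
  set R : ((Fin m ⊕ Fin p) → ℝ) →L[ℝ] (Fin m → ℝ) :=
    ContinuousLinearMap.pi (fun i => ContinuousLinearMap.proj (Sum.inl i)) with hRdef
  have hR : ∀ y : (Fin m ⊕ Fin p) → ℝ, R y = fun i => y (Sum.inl i) := fun y => rfl
  have H1 : HasFDerivAt (fun y : (Fin m ⊕ Fin p) → ℝ => ∑ d, c d * y (Sum.inr d))
      (∑ d, c d • (ContinuousLinearMap.proj (Sum.inr d) :
        ((Fin m ⊕ Fin p) → ℝ) →L[ℝ] ℝ)) x := by
    refine HasFDerivAt.fun_sum (fun d _ => ?_)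
    exact ((ContinuousLinearMap.proj (Sum.inr d) : ((Fin m ⊕ Fin p) → ℝ) →L[ℝ] ℝ).hasFDerivAt
      (x := x)).const_mul (c d)
  have H2 : HasFDerivAt (fun y : (Fin m ⊕ Fin p) → ℝ => Ψ (R y))
      ((fderiv ℝ Ψ (R x)).comp R) x :=
    ((hΨ (R x)).hasFDerivAt).comp x (R.hasFDerivAt (x := x))
  have H3 := H1.add (H2.mul_const K)
  have H : HasFDerivAt (fun y : (Fin m ⊕ Fin p) → ℝ =>
      (∑ d, c d * y (Sum.inr d)) + Ψ (fun i => y (Sum.inl i)) * K)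
      ((∑ d, c d • (ContinuousLinearMap.proj (Sum.inr d) :
        ((Fin m ⊕ Fin p) → ℝ) →L[ℝ] ℝ)) + K • ((fderiv ℝ Ψ (R x)).comp R)) x := H3
  rw [H.fderiv]
  simp [ContinuousLinearMap.proj_apply, hR]
  ring


/-- Let `g`, `h` be finite-dimensional real Lie algebras given by
structure constants `g i j k`, `h a b c` (antisymmetric, satisfying the Jacobi
identity), let `Ψ` be a differentiable Casimir function for the Lie–Poisson
structure on `g*` (`{xᵏ,Ψ} = 0`), and let `C` be an (antisymmetric) 2-cocycle
on `h` with trivial real coefficients.  Then the bivector `π` on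
`(g ⊕ h)* ≅ ℝ^{m+p}` (coordinates indexed by `Fin m ⊕ Fin p`) with components
`π^{ij} = gᵢⱼᵏ xₖ`, `π^{ai} = 0`, `π^{ab} = hₐᵦᶜ y_c + Ψ(x) C^{ab}` satisfies
the Jacobi identity `Σ_s (π^{si} ∂_s π^{jk} + π^{sj} ∂_s π^{ki} + π^{sk} ∂_s π^{ij}) = 0`,
i.e. defines a Poisson structure. -/
theorem stmt_8 (m p : ℕ)
    (g : Fin m → Fin m → Fin m → ℝ) (h : Fin p → Fin p → Fin p → ℝ)
    (hganti : ∀ i j k, g i j k = - g j i k)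
    (hhanti : ∀ a b c, h a b c = - h b a c)
    (hgjac : ∀ i j k t, ∑ s, (g i j s * g s k t + g j k s * g s i t + g k i s * g s j t) = 0)
    (hhjac : ∀ a b c t, ∑ s, (h a b s * h s c t + h b c s * h s a t + h c a s * h s b t) = 0)
    (C : Fin p → Fin p → ℝ) (hCanti : ∀ a b, C a b = - C b a)
    (hCcoc : ∀ a b c, ∑ d, (C a d * h b c d + C b d * h c a d + C c d * h a b d) = 0)
    (Ψ : (Fin m → ℝ) → ℝ) (hΨdiff : Differentiable ℝ Ψ)
    (hΨcas : ∀ (x : Fin m → ℝ) (k : Fin m),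
      ∑ j, (∑ l, g k j l * x l) * fderiv ℝ Ψ x (Pi.single j 1) = 0)
    (π : (Fin m ⊕ Fin p) → (Fin m ⊕ Fin p) → ((Fin m ⊕ Fin p) → ℝ) → ℝ)
    (hπgg : ∀ i j x, π (Sum.inl i) (Sum.inl j) x = ∑ k, g i j k * x (Sum.inl k))
    (hπgh : ∀ i a x, π (Sum.inl i) (Sum.inr a) x = 0)
    (hπhg : ∀ a i x, π (Sum.inr a) (Sum.inl i) x = 0)
    (hπhh : ∀ a b x, π (Sum.inr a) (Sum.inr b) x =
      (∑ c, h a b c * x (Sum.inr c)) + Ψ (fun i => x (Sum.inl i)) * C a b) :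
    ∀ (x : (Fin m ⊕ Fin p) → ℝ) (i j k : Fin m ⊕ Fin p),
      ∑ s, (π s i x * fderiv ℝ (π j k) x (Pi.single s 1)
          + π s j x * fderiv ℝ (π k i) x (Pi.single s 1)
          + π s k x * fderiv ℝ (π i j) x (Pi.single s 1)) = 0 := by
  -- derivative evaluation lemmas
  have d1 : ∀ (j k : Fin m) (x v : (Fin m ⊕ Fin p) → ℝ),
      fderiv ℝ (π (Sum.inl j) (Sum.inl k)) x v = ∑ l, g j k l * v (Sum.inl l) := by
    intro j k x v
    rw [show π (Sum.inl j) (Sum.inl k) = fun y => ∑ l, g j k l * y (Sum.inl l) from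
      funext (hπgg j k), fderiv_lin]
  have e1 : ∀ (j k : Fin m) (x : (Fin m ⊕ Fin p) → ℝ) (t : Fin m),
      fderiv ℝ (π (Sum.inl j) (Sum.inl k)) x (Pi.single (Sum.inl t) 1) = g j k t := by
    intro j k x t
    rw [d1]
    simp [Pi.single_apply]
  have e2 : ∀ (j k : Fin m) (x : (Fin m ⊕ Fin p) → ℝ) (c : Fin p),
      fderiv ℝ (π (Sum.inl j) (Sum.inl k)) x (Pi.single (Sum.inr c) 1) = 0 := by
    intro j k x c
    rw [d1]
    simp [Pi.single_apply]
  have e3 : ∀ (i : Fin m) (a : Fin p) (x v : (Fin m ⊕ Fin p) → ℝ),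
      fderiv ℝ (π (Sum.inl i) (Sum.inr a)) x v = 0 := by
    intro i a x v
    rw [show π (Sum.inl i) (Sum.inr a) = fun _ => (0 : ℝ) from funext (hπgh i a), fderiv_fun_const]
    simp
  have e3' : ∀ (a : Fin p) (i : Fin m) (x v : (Fin m ⊕ Fin p) → ℝ),
      fderiv ℝ (π (Sum.inr a) (Sum.inl i)) x v = 0 := by
    intro a i x v
    rw [show π (Sum.inr a) (Sum.inl i) = fun _ => (0 : ℝ) from funext (hπhg a i), fderiv_fun_const]
    simp
  have d4 : ∀ (a b : Fin p) (x v : (Fin m ⊕ Fin p) → ℝ),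
      fderiv ℝ (π (Sum.inr a) (Sum.inr b)) x v =
        (∑ d, h a b d * v (Sum.inr d)) +
          (fderiv ℝ Ψ (fun i => x (Sum.inl i)) (fun i => v (Sum.inl i))) * C a b := by
    intro a b x v
    rw [show π (Sum.inr a) (Sum.inr b) = fun y =>
        (∑ d, h a b d * y (Sum.inr d)) + Ψ (fun i => y (Sum.inl i)) * C a b from
      funext (hπhh a b), fderiv_hh _ _ _ hΨdiff]
  have e4 : ∀ (a b : Fin p) (x : (Fin m ⊕ Fin p) → ℝ) (t : Fin m),
      fderiv ℝ (π (Sum.inr a) (Sum.inr b)) x (Pi.single (Sum.inl t) 1) =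
        fderiv ℝ Ψ (fun i => x (Sum.inl i)) (Pi.single t 1) * C a b := by
    intro a b x t
    rw [d4]
    have h0 : (fun i : Fin m => (Pi.single (Sum.inl t) (1 : ℝ) : (Fin m ⊕ Fin p) → ℝ) (Sum.inl i)) = Pi.single t 1 := by
      funext i
      simp [Pi.single_apply]
    rw [h0]
    simp [Pi.single_apply]
  have e5 : ∀ (a b : Fin p) (x : (Fin m ⊕ Fin p) → ℝ) (c : Fin p),
      fderiv ℝ (π (Sum.inr a) (Sum.inr b)) x (Pi.single (Sum.inr c) 1) = h a b c := by
    intro a b x c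
    rw [d4]
    have h0 : (fun i : Fin m => (Pi.single (Sum.inr c) (1 : ℝ) : (Fin m ⊕ Fin p) → ℝ) (Sum.inl i)) = (0 : Fin m → ℝ) := by
      funext i
      simp [Pi.single_apply]
    rw [h0, map_zero]
    simp [Pi.single_apply]
  intro x i j k
  -- the essential mixed (one g, two h) computation
  have mixed : ∀ (i : Fin m) (K : ℝ),
      ∑ t, (∑ l, g t i l * x (Sum.inl l)) *
        (fderiv ℝ Ψ (fun i => x (Sum.inl i)) (Pi.single t 1) * K) = 0 := by
    intro i K
    have hswap : ∀ t, (∑ l, g t i l * x (Sum.inl l)) = -∑ l, g i t l * x (Sum.inl l) := by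
      intro t
      rw [← Finset.sum_neg_distrib]
      exact Finset.sum_congr rfl fun l _ => by rw [hganti t i l]; ring
    calc ∑ t, (∑ l, g t i l * x (Sum.inl l)) *
          (fderiv ℝ Ψ (fun i => x (Sum.inl i)) (Pi.single t 1) * K)
        = ∑ t, -((∑ l, g i t l * x (Sum.inl l)) *
            fderiv ℝ Ψ (fun i => x (Sum.inl i)) (Pi.single t 1) * K) :=
          Finset.sum_congr rfl fun t _ => by rw [hswap t]; ring
      _ = -((∑ t, (∑ l, g i t l * x (Sum.inl l)) *
            fderiv ℝ Ψ (fun i => x (Sum.inl i)) (Pi.single t 1)) * K) := by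
          rw [Finset.sum_neg_distrib, ← Finset.sum_mul]
      _ = 0 := by rw [hΨcas (fun i => x (Sum.inl i)) i]; ring
  rcases i with i | a <;> rcases j with j | b <;> rcases k with k | c <;>
    simp only [Fintype.sum_sum_type, hπgg, hπgh, hπhg, hπhh, e1, e2, e3, e3', e4, e5,
      zero_mul, mul_zero, add_zero, zero_add, Finset.sum_const_zero]
  · -- g g g
    simp only [Finset.sum_mul, ← Finset.sum_add_distrib]
    rw [Finset.sum_comm]
    refine Finset.sum_eq_zero fun l _ => ?_
    calc ∑ t, (g t i l * x (Sum.inl l) * g j k t + g t j l * x (Sum.inl l) * g k i t +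
            g t k l * x (Sum.inl l) * g i j t)
        = ∑ t, x (Sum.inl l) * (g i j t * g t k l + g j k t * g t i l + g k i t * g t j l) :=
          Finset.sum_congr rfl fun t _ => by ring
      _ = x (Sum.inl l) * ∑ t, (g i j t * g t k l + g j k t * g t i l + g k i t * g t j l) := by
          rw [Finset.mul_sum]
      _ = 0 := by rw [hgjac i j k l, mul_zero]
  · exact mixed i (C b c)
  · exact mixed j (C c a)
  · exact mixed k (C a b)
  · -- h h h
    have hfirst : ∑ d, ((∑ e, h d a e * x (Sum.inr e)) * h b c d +
        (∑ e, h d b e * x (Sum.inr e)) * h c a d +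
        (∑ e, h d c e * x (Sum.inr e)) * h a b d) = 0 := by
      simp only [Finset.sum_mul, ← Finset.sum_add_distrib]
      rw [Finset.sum_comm]
      refine Finset.sum_eq_zero fun e _ => ?_
      calc ∑ d, (h d a e * x (Sum.inr e) * h b c d + h d b e * x (Sum.inr e) * h c a d +
              h d c e * x (Sum.inr e) * h a b d)
          = ∑ d, x (Sum.inr e) * (h a b d * h d c e + h b c d * h d a e + h c a d * h d b e) :=
            Finset.sum_congr rfl fun d _ => by ring
        _ = x (Sum.inr e) * ∑ d, (h a b d * h d c e + h b c d * h d a e + h c a d * h d b e) := by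
            rw [Finset.mul_sum]
        _ = 0 := by rw [hhjac a b c e, mul_zero]
    have hC2 : ∑ d, (C d a * h b c d + C d b * h c a d + C d c * h a b d) = 0 := by
      have h1 : ∑ d, (C d a * h b c d + C d b * h c a d + C d c * h a b d)
          = -∑ d, (C a d * h b c d + C b d * h c a d + C c d * h a b d) := by
        rw [← Finset.sum_neg_distrib]
        exact Finset.sum_congr rfl fun d _ => by rw [hCanti a d, hCanti b d, hCanti c d]; ring
      rw [h1, hCcoc, neg_zero]
    calc ∑ d, ((∑ e, h d a e * x (Sum.inr e) + Ψ (fun i => x (Sum.inl i)) * C d a) * h b c d +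
            (∑ e, h d b e * x (Sum.inr e) + Ψ (fun i => x (Sum.inl i)) * C d b) * h c a d +
            (∑ e, h d c e * x (Sum.inr e) + Ψ (fun i => x (Sum.inl i)) * C d c) * h a b d)
        = (∑ d, ((∑ e, h d a e * x (Sum.inr e)) * h b c d +
            (∑ e, h d b e * x (Sum.inr e)) * h c a d +
            (∑ e, h d c e * x (Sum.inr e)) * h a b d)) +
          Ψ (fun i => x (Sum.inl i)) *
            ∑ d, (C d a * h b c d + C d b * h c a d + C d c * h a b d) := by
          rw [Finset.mul_sum, ← Finset.sum_add_distrib]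
          exact Finset.sum_congr rfl fun d _ => by ring
      _ = 0 := by rw [hfirst, hC2, mul_zero, add_zero]
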